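/- Truth lemma for the canonical model: for every node Γ' ⇒ Δ' of the saturation of an NSMB-unprovable nested-sequent, if A ∈ Γ' then A is true at the world Γ' ⇒ Δ' of the canonical model (S_C, R_C, P_C, V_C), and if A ∈ Δ' then A is false at that world. -/

import Mathlib

set_option maxHeartbeats 1000000

namespace MBQL

/-- The fixed finite set `J ⊆ [0,1]` of inner-product values, with `0, 1 ∈ J`. -/
structure MBParams where
  J : Set ℝ
  finite : J.Finite
  subI : J ⊆ Set.Icc (0:ℝ) 1
  zero_mem : (0:ℝ) ∈ J
  one_mem : (1:ℝ) ∈ J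

/-- Formulas of **MB**: `A ::= p | ⊤ | ⊥ | ¬A | A∧A | □^c_α A | □^o_α A` (α ∈ J). -/
inductive MBForm (Pm : MBParams) : Type
  | var : ℕ → MBForm Pm
  | top : MBForm Pm
  | bot : MBForm Pm
  | neg : MBForm Pm → MBForm Pm
  | conj : MBForm Pm → MBForm Pm → MBForm Pm
  | boxc : Pm.J → MBForm Pm → MBForm Pm
  | boxo : Pm.J → MBForm Pm → MBForm Pm

noncomputable instance {Pm : MBParams} : DecidableEq (MBForm Pm) := Classical.decEq _

/-- Valuation of a formula, given worlds `S`, a relation `R : S → S → ℝ` and a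
valuation `V` of the propositional variables. -/
def MBForm.valR {Pm : MBParams} {S : Type} (R : S → S → ℝ) (V : ℕ → Set S) :
    MBForm Pm → Set S
  | .var n => V n
  | .top => Set.univ
  | .bot => ∅
  | .neg A => (A.valR R V)ᶜ
  | .conj A B => A.valR R V ∩ B.valR R V
  | .boxc α A => {s | ∀ t, (α : ℝ) ≤ R s t → t ∈ A.valR R V}
  | .boxo α A => {s | ∀ t, (α : ℝ) < R s t → t ∈ A.valR R V}

/-- An EQL-frame. -/
structure EQLFrame where
  S : Type
  nonempty : Nonempty S
  R : S → S → ℝ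
  mem_Icc : ∀ s t, R s t ∈ Set.Icc (0:ℝ) 1
  eq_one_iff : ∀ s t, (R s t = 1 ↔ s = t)
  symm : ∀ s t, R s t = R t s

/-- An MB-realization. -/
structure MBRealization (Pm : MBParams) where
  F : EQLFrame
  P : Set (Set F.S)
  univ_mem : Set.univ ∈ P
  empty_mem : ∅ ∈ P
  inter_mem : ∀ X ∈ P, ∀ Y ∈ P, X ∩ Y ∈ P
  compl_mem : ∀ X ∈ P, Xᶜ ∈ P
  boxc_mem : ∀ α ∈ Pm.J, ∀ X ∈ P, {s | ∀ t, α ≤ F.R s t → t ∈ X} ∈ P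
  boxo_mem : ∀ α ∈ Pm.J, ∀ X ∈ P, {s | ∀ t, α < F.R s t → t ∈ X} ∈ P
  V : ℕ → Set F.S
  V_mem : ∀ n, V n ∈ P

/-- The extended valuation of a formula in an MB-realization. -/
def MBRealization.val {Pm : MBParams} (M : MBRealization Pm) (A : MBForm Pm) :
    Set M.F.S := A.valR M.F.R M.V

/-- Validity of an MB-formula. -/
def MBValid {Pm : MBParams} (A : MBForm Pm) : Prop :=
  ∀ (M : MBRealization Pm) (s : M.F.S), s ∈ M.val A

inductive Side : Type
  | c : Side
  | o : Side
deriving DecidableEq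

/-- A label `(α, d)` on a modal bracket, with `α ∈ J − {1}`. -/
structure MBLab (Pm : MBParams) where
  α : ℝ
  memJ : α ∈ Pm.J
  ne_one : α ≠ 1
  d : Side

mutual
/-- Nested-sequents: a finite tree whose nodes are sequents (pairs of finite
sets of formulas) and whose edges carry labels. -/
inductive NSeq (Pm : MBParams) : Type
  | node : Finset (MBForm Pm) → Finset (MBForm Pm) → NSeqs Pm → NSeq Pm
/-- A finite list of labelled child nested-sequents. -/
inductive NSeqs (Pm : MBParams) : Type
  | nil : NSeqs Pm
  | cons : MBLab Pm → NSeq Pm → NSeqs Pm → NSeqs Pm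
end

/-- The `i`-th labelled child. -/
def NSeqs.get {Pm : MBParams} : NSeqs Pm → ℕ → Option (MBLab Pm × NSeq Pm)
  | .nil, _ => none
  | .cons l t _, 0 => some (l, t)
  | .cons _ _ ts, n+1 => ts.get n

/-- `SubAt t p u`: the subtree of `t` at the path (node address) `p` is `u`. -/
inductive SubAt {Pm : MBParams} : NSeq Pm → List ℕ → NSeq Pm → Prop
  | here (t : NSeq Pm) : SubAt t [] t
  | there {Γ Δ : Finset (MBForm Pm)} {ts : NSeqs Pm} {i : ℕ} {l : MBLab Pm}
      {u v : NSeq Pm} {p : List ℕ} :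
      NSeqs.get ts i = some (l, u) → SubAt u p v → SubAt (.node Γ Δ ts) (i :: p) v

/-- `p` is (the address of) a node of `t`. -/
def IsNode {Pm : MBParams} (t : NSeq Pm) (p : List ℕ) : Prop := ∃ u, SubAt t p u

mutual
/-- Replace the sequent at the node with address `p` by `Γ' ⇒ Δ'`
(children are kept). -/
def NSeq.setSeq {Pm : MBParams} :
    NSeq Pm → List ℕ → Finset (MBForm Pm) → Finset (MBForm Pm) → NSeq Pm
  | .node _ _ ts, [], Γ', Δ' => .node Γ' Δ' ts
  | .node Γ Δ ts, i :: p, Γ', Δ' => .node Γ Δ (NSeqs.setSeqs ts i p Γ' Δ')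
def NSeqs.setSeqs {Pm : MBParams} :
    NSeqs Pm → ℕ → List ℕ → Finset (MBForm Pm) → Finset (MBForm Pm) → NSeqs Pm
  | .nil, _, _, _, _ => .nil
  | .cons l t ts, 0, p, Γ', Δ' => .cons l (t.setSeq p Γ' Δ') ts
  | .cons l t ts, n+1, p, Γ', Δ' => .cons l t (NSeqs.setSeqs ts n p Γ' Δ')
end

/-- Append a labelled child at the end of a children list. -/
def NSeqs.snoc {Pm : MBParams} : NSeqs Pm → MBLab Pm → NSeq Pm → NSeqs Pm
  | .nil, l, u => .cons l u .nil
  | .cons l' t ts, l, u => .cons l' t (ts.snoc l u)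

mutual
/-- Add a new child `[u]_l` at the node with address `p`. -/
def NSeq.addChild {Pm : MBParams} : NSeq Pm → List ℕ → MBLab Pm → NSeq Pm → NSeq Pm
  | .node Γ Δ ts, [], l, u => .node Γ Δ (ts.snoc l u)
  | .node Γ Δ ts, i :: p, l, u => .node Γ Δ (NSeqs.addChilds ts i p l u)
def NSeqs.addChilds {Pm : MBParams} : NSeqs Pm → ℕ → List ℕ → MBLab Pm → NSeq Pm → NSeqs Pm
  | .nil, _, _, _, _ => .nil
  | .cons l' t ts, 0, p, l, u => .cons l' (t.addChild p l u) ts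
  | .cons l' t ts, n+1, p, l, u => .cons l' t (NSeqs.addChilds ts n p l u)
end


/-- Logical connectives defined by abbreviation: `A ∨ B`. -/
def MBForm.or {Pm : MBParams} (A B : MBForm Pm) : MBForm Pm := .neg (.conj (.neg A) (.neg B))

/-- `A → B := ¬A ∨ B`. -/
def MBForm.imp {Pm : MBParams} (A B : MBForm Pm) : MBForm Pm := (MBForm.neg A).or B

/-- Conjunction of a list of formulas. -/
def conjList {Pm : MBParams} : List (MBForm Pm) → MBForm Pm
  | [] => .top
  | [A] => A
  | A :: B :: rest => .conj A (conjList (B :: rest))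

/-- Disjunction of a list of formulas. -/
def disjList {Pm : MBParams} : List (MBForm Pm) → MBForm Pm
  | [] => .bot
  | [A] => A
  | A :: B :: rest => (A).or (disjList (B :: rest))

/-- `⋀Γ → ⋁Δ`. -/
noncomputable def seqForm {Pm : MBParams} (Γ Δ : Finset (MBForm Pm)) : MBForm Pm :=
  (conjList Γ.toList).imp (disjList Δ.toList)

/-- The box corresponding to a bracket label. -/
def MBLab.box {Pm : MBParams} (l : MBLab Pm) (A : MBForm Pm) : MBForm Pm :=
  match l.d with
  | .c => .boxc ⟨l.α, l.memJ⟩ A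
  | .o => .boxo ⟨l.α, l.memJ⟩ A

mutual
/-- The interpretation `τ` of a nested-sequent as a formula. -/
noncomputable def NSeq.tau {Pm : MBParams} : NSeq Pm → MBForm Pm
  | .node Γ Δ ts => NSeqs.tauAux (seqForm Γ Δ) ts
noncomputable def NSeqs.tauAux {Pm : MBParams} : MBForm Pm → NSeqs Pm → MBForm Pm
  | A, .nil => A
  | A, .cons l t ts => NSeqs.tauAux (A.or (l.box t.tau)) ts
end

/-- `E` is an embedding of the nested-sequent `t` into the realization `M`
(`E` is given on node addresses). -/
def IsEmb {Pm : MBParams} (M : MBRealization Pm) (t : NSeq Pm)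
    (E : List ℕ → M.F.S) : Prop :=
  ∀ p Γ Δ ts i l u, SubAt t p (.node Γ Δ ts) → NSeqs.get ts i = some (l, u) →
    (l.d = Side.c → l.α ≤ M.F.R (E p) (E (p ++ [i]))) ∧
    (l.d = Side.o → l.α < M.F.R (E p) (E (p ++ [i])))

/-- The nested-sequent `t` is false in `M` under `E`. -/
def FalseUnder {Pm : MBParams} (M : MBRealization Pm) (t : NSeq Pm)
    (E : List ℕ → M.F.S) : Prop :=
  ∀ p Γ Δ ts, SubAt t p (.node Γ Δ ts) →
    (∀ A ∈ Γ, E p ∈ M.val A) ∧ (∀ A ∈ Δ, E p ∉ M.val A)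

/-- Validity of a nested-sequent: it is not false under any embedding into
any MB-realization. -/
def NSValid {Pm : MBParams} (t : NSeq Pm) : Prop :=
  ∀ (M : MBRealization Pm) (E : List ℕ → M.F.S), IsEmb M t E → ¬ FalseUnder M t E


/-- `□^d_α A`. -/
def mkBox {Pm : MBParams} (d : Side) (α : Pm.J) (A : MBForm Pm) : MBForm Pm :=
  match d with
  | .c => .boxc α A
  | .o => .boxo α A

/-- The total order `⪯` on `I × {c,o}`: `pleq α d β d'` means `(α,d) ⪯ (β,d')`. -/
def pleq : ℝ → Side → ℝ → Side → Prop
  | α, .o, β, .c => α < β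
  | α, _, β, _ => α ≤ β

/-- Provability in the nested-sequent calculus **NSMB**.  The boolean
parameter records whether the rule (cut) may be used. -/
inductive Provable {Pm : MBParams} : Bool → NSeq Pm → Prop
  /-- axiom `‖A, Γ ⇒ Δ, A, T‖` -/
  | axId {cut : Bool} {t : NSeq Pm} {p Γ Δ ts A} :
      SubAt t p (.node Γ Δ ts) → A ∈ Γ → A ∈ Δ → Provable cut t
  /-- axiom `‖Γ ⇒ Δ, ⊤, T‖` -/
  | axTop {cut : Bool} {t : NSeq Pm} {p Γ Δ ts} :
      SubAt t p (.node Γ Δ ts) → MBForm.top ∈ Δ → Provable cut t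
  /-- axiom `‖⊥, Γ ⇒ Δ, T‖` -/
  | axBot {cut : Bool} {t : NSeq Pm} {p Γ Δ ts} :
      SubAt t p (.node Γ Δ ts) → MBForm.bot ∈ Γ → Provable cut t
  /-- axiom `‖Γ ⇒ Δ, □^o_1 A, T‖` -/
  | axBoxO1 {cut : Bool} {t : NSeq Pm} {p Γ Δ ts A} :
      SubAt t p (.node Γ Δ ts) → MBForm.boxo ⟨1, Pm.one_mem⟩ A ∈ Δ → Provable cut t
  /-- rule (cut) -/
  | cutR {t : NSeq Pm} {p Γ Δ ts A} :
      SubAt t p (.node Γ Δ ts) →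
      Provable true (t.setSeq p Γ (insert A Δ)) →
      Provable true (t.setSeq p (insert A Γ) Δ) →
      Provable true t
  /-- rule (wL) -/
  | wL {cut : Bool} {t : NSeq Pm} {p Γ Δ ts A} :
      SubAt t p (.node Γ Δ ts) → Provable cut t →
      Provable cut (t.setSeq p (insert A Γ) Δ)
  /-- rule (wR) -/
  | wR {cut : Bool} {t : NSeq Pm} {p Γ Δ ts A} :
      SubAt t p (.node Γ Δ ts) → Provable cut t →
      Provable cut (t.setSeq p Γ (insert A Δ))
  /-- rule (¬L) -/
  | negL {cut : Bool} {t : NSeq Pm} {p Γ Δ ts A} :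
      SubAt t p (.node Γ Δ ts) →
      Provable cut (t.setSeq p Γ (insert A Δ)) →
      Provable cut (t.setSeq p (insert (MBForm.neg A) Γ) Δ)
  /-- rule (¬R) -/
  | negR {cut : Bool} {t : NSeq Pm} {p Γ Δ ts A} :
      SubAt t p (.node Γ Δ ts) →
      Provable cut (t.setSeq p (insert A Γ) Δ) →
      Provable cut (t.setSeq p Γ (insert (MBForm.neg A) Δ))
  /-- rule (∧L) -/
  | andL {cut : Bool} {t : NSeq Pm} {p Γ Δ ts A B} :
      SubAt t p (.node Γ Δ ts) →
      Provable cut (t.setSeq p (insert A (insert B Γ)) Δ) →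
      Provable cut (t.setSeq p (insert (MBForm.conj A B) Γ) Δ)
  /-- rule (∧R) -/
  | andR {cut : Bool} {t : NSeq Pm} {p Γ Δ ts A B} :
      SubAt t p (.node Γ Δ ts) →
      Provable cut (t.setSeq p Γ (insert A Δ)) →
      Provable cut (t.setSeq p Γ (insert B Δ)) →
      Provable cut (t.setSeq p Γ (insert (MBForm.conj A B) Δ))
  /-- rule (□L), with side condition `(α,d) ⪯ (β,d')` -/
  | boxL {cut : Bool} {t : NSeq Pm} {p Γ Δ ts i l u Γ' Δ' ts' A} {α : Pm.J} {d : Side} :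
      SubAt t p (.node Γ Δ ts) → NSeqs.get ts i = some (l, u) →
      SubAt t (p ++ [i]) (.node Γ' Δ' ts') →
      pleq (α : ℝ) d l.α l.d →
      Provable cut (t.setSeq (p ++ [i]) (insert A Γ') Δ') →
      Provable cut (t.setSeq p (insert (mkBox d α A) Γ) Δ)
  /-- rule (□L sym), with side condition `(α,d) ⪯ (β,d')` -/
  | boxLsym {cut : Bool} {t : NSeq Pm} {p Γ Δ ts i l u Γ' Δ' ts' A} {α : Pm.J} {d : Side} :
      SubAt t p (.node Γ Δ ts) → NSeqs.get ts i = some (l, u) →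
      SubAt t (p ++ [i]) (.node Γ' Δ' ts') →
      pleq (α : ℝ) d l.α l.d →
      Provable cut (t.setSeq p (insert A Γ) Δ) →
      Provable cut (t.setSeq (p ++ [i]) (insert (mkBox d α A) Γ') Δ')
  /-- rule (□L self), with side condition `(α,d) ≠ (1,o)` -/
  | boxLself {cut : Bool} {t : NSeq Pm} {p Γ Δ ts A} {α : Pm.J} {d : Side} :
      SubAt t p (.node Γ Δ ts) → ¬((α : ℝ) = 1 ∧ d = Side.o) →
      Provable cut (t.setSeq p (insert A Γ) Δ) →
      Provable cut (t.setSeq p (insert (mkBox d α A) Γ) Δ)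
  /-- rule (□^c_0): erase `A` from the left of one node and add `□^c_0 A`
  to the left of another arbitrary node -/
  | boxC0 {cut : Bool} {t : NSeq Pm} {p Γ Δ ts q Γ'' Δ'' ts'' A} :
      SubAt t p (.node Γ Δ ts) → SubAt t q (.node Γ'' Δ'' ts'') →
      Provable cut (t.setSeq p (insert A Γ) Δ) →
      Provable cut (t.setSeq q (insert (MBForm.boxc ⟨0, Pm.zero_mem⟩ A) Γ'') Δ'')
  /-- rule (□R) -/
  | boxR {cut : Bool} {t : NSeq Pm} {p Γ Δ ts A} {l : MBLab Pm} :
      SubAt t p (.node Γ Δ ts) →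
      Provable cut (t.addChild p l (.node ∅ {A} .nil)) →
      Provable cut (t.setSeq p Γ (insert (l.box A) Δ))
  /-- rule (□R self) -/
  | boxRself {cut : Bool} {t : NSeq Pm} {p Γ Δ ts A} :
      SubAt t p (.node Γ Δ ts) →
      Provable cut (t.setSeq p Γ (insert A Δ)) →
      Provable cut (t.setSeq p Γ (insert (MBForm.boxc ⟨1, Pm.one_mem⟩ A) Δ))


/-- The subformula relation. -/
inductive Subf {Pm : MBParams} : MBForm Pm → MBForm Pm → Prop
  | refl (A : MBForm Pm) : Subf A A
  | negS {A B : MBForm Pm} : Subf A B → Subf A (.neg B)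
  | conjL {A B C : MBForm Pm} : Subf A B → Subf A (.conj B C)
  | conjR {A B C : MBForm Pm} : Subf A C → Subf A (.conj B C)
  | boxcS {A B : MBForm Pm} {α : Pm.J} : Subf A B → Subf A (.boxc α B)
  | boxoS {A B : MBForm Pm} {α : Pm.J} : Subf A B → Subf A (.boxo α B)

/-- `A` occurs in (some sequent of) the nested-sequent `t`. -/
def OccursIn {Pm : MBParams} (A : MBForm Pm) (t : NSeq Pm) : Prop :=
  ∃ p Γ Δ ts, SubAt t p (.node Γ Δ ts) ∧ (A ∈ Γ ∨ A ∈ Δ)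

/-- One step of the saturation procedure used to build `Γ_C ⇒ Δ_C, T_C`.
The state is a nested-sequent together with the set of (address, formula)
occurrences of right-hand boxed formulas that have already been processed by
step (8). -/
inductive SatStep {Pm : MBParams} :
    NSeq Pm × Set (List ℕ × MBForm Pm) → NSeq Pm × Set (List ℕ × MBForm Pm) → Prop
  /-- step (1): `A ∧ B` on the left -/
  | andL {t D p Γ Δ ts A B} :
      SubAt t p (.node Γ Δ ts) → MBForm.conj A B ∈ Γ →
      SatStep (t, D) (t.setSeq p (insert A (insert B Γ)) Δ, D)
  /-- step (2): `A ∧ B` on the right; the disjunct keeping unprovability is adopted -/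
  | andR {t D p Γ Δ ts A B C} :
      SubAt t p (.node Γ Δ ts) → MBForm.conj A B ∈ Δ → (C = A ∨ C = B) →
      ¬ Provable true (t.setSeq p Γ (insert C Δ)) →
      SatStep (t, D) (t.setSeq p Γ (insert C Δ), D)
  /-- step (3): `¬A` on the left -/
  | negL {t D p Γ Δ ts A} :
      SubAt t p (.node Γ Δ ts) → MBForm.neg A ∈ Γ →
      SatStep (t, D) (t.setSeq p Γ (insert A Δ), D)
  /-- step (4): `¬A` on the right -/
  | negR {t D p Γ Δ ts A} :
      SubAt t p (.node Γ Δ ts) → MBForm.neg A ∈ Δ →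
      SatStep (t, D) (t.setSeq p (insert A Γ) Δ, D)
  /-- step (5): `□^d_α A` on the left of the parent of a bracket with `(α,d) ⪯ (β,d')` -/
  | boxL {t D p Γ Δ ts i l u Γ' Δ' ts' A} {α : Pm.J} {d : Side} :
      SubAt t p (.node Γ Δ ts) → NSeqs.get ts i = some (l, u) →
      SubAt t (p ++ [i]) (.node Γ' Δ' ts') →
      pleq (α : ℝ) d l.α l.d → mkBox d α A ∈ Γ →
      SatStep (t, D) (t.setSeq (p ++ [i]) (insert A Γ') Δ', D)
  /-- step (6): `□^d_α A` on the left of the child of a bracket with `(α,d) ⪯ (β,d')` -/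
  | boxLsym {t D p Γ Δ ts i l u Γ' Δ' ts' A} {α : Pm.J} {d : Side} :
      SubAt t p (.node Γ Δ ts) → NSeqs.get ts i = some (l, u) →
      SubAt t (p ++ [i]) (.node Γ' Δ' ts') →
      pleq (α : ℝ) d l.α l.d → mkBox d α A ∈ Γ' →
      SatStep (t, D) (t.setSeq p (insert A Γ) Δ, D)
  /-- step (7): `□^d_α A` on the left, `(α,d) ≠ (1,o)` -/
  | boxLself {t D p Γ Δ ts A} {α : Pm.J} {d : Side} :
      SubAt t p (.node Γ Δ ts) → ¬((α : ℝ) = 1 ∧ d = Side.o) → mkBox d α A ∈ Γ →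
      SatStep (t, D) (t.setSeq p (insert A Γ) Δ, D)
  /-- step (8): `□^d_α A` on the right (`α ≠ 1`), performed once per occurrence -/
  | boxR {t D p Γ Δ ts A} {α : Pm.J} {d : Side} (hne : (α : ℝ) ≠ 1) :
      SubAt t p (.node Γ Δ ts) → mkBox d α A ∈ Δ → (p, mkBox d α A) ∉ D →
      SatStep (t, D)
        (t.addChild p ⟨(α : ℝ), α.2, hne, d⟩ (.node ∅ {A} .nil),
         insert (p, mkBox d α A) D)
  /-- step (9): `□^c_1 A` on the right -/
  | boxRself {t D p Γ Δ ts A} :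
      SubAt t p (.node Γ Δ ts) → MBForm.boxc ⟨1, Pm.one_mem⟩ A ∈ Δ →
      SatStep (t, D) (t.setSeq p Γ (insert A Δ), D)
  /-- step (10): `□^c_0 A` on the left of some node: add `A` to the left of any node -/
  | boxC0 {t D p Γ Δ ts q Γ'' Δ'' ts'' A} :
      SubAt t p (.node Γ Δ ts) → MBForm.boxc ⟨0, Pm.zero_mem⟩ A ∈ Γ →
      SubAt t q (.node Γ'' Δ'' ts'') →
      SatStep (t, D) (t.setSeq q (insert A Γ'') Δ'', D)

/-- A state of the saturation procedure is saturated (terminal) when no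
saturation step changes it any more. -/
def Saturated {Pm : MBParams} (s : NSeq Pm × Set (List ℕ × MBForm Pm)) : Prop :=
  ∀ s', SatStep s s' → s' = s


mutual
/-- The subtree of `t` at address `p`, as a function. -/
def NSeq.sub? {Pm : MBParams} : NSeq Pm → List ℕ → Option (NSeq Pm)
  | t, [] => some t
  | .node _ _ ts, i :: p => NSeqs.subs? ts i p
def NSeqs.subs? {Pm : MBParams} : NSeqs Pm → ℕ → List ℕ → Option (NSeq Pm)
  | .nil, _, _ => none
  | .cons _ t _, 0, p => t.sub? p
  | .cons _ _ ts, n+1, p => NSeqs.subs? ts n p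
end

/-- The label of the edge from the node at address `p` to its `i`-th child. -/
def labelAt {Pm : MBParams} (t : NSeq Pm) (p : List ℕ) (i : ℕ) : Option (MBLab Pm) :=
  match t.sub? p with
  | some (.node _ _ ts) => (NSeqs.get ts i).map Prod.fst
  | none => none

/-- The set of elements of `J` appearing in a formula. -/
def MBForm.jsetF {Pm : MBParams} : MBForm Pm → Set ℝ
  | .var _ => ∅
  | .top => ∅
  | .bot => ∅
  | .neg A => A.jsetF
  | .conj A B => A.jsetF ∪ B.jsetF
  | .boxc α A => insert (α : ℝ) A.jsetF
  | .boxo α A => insert (α : ℝ) A.jsetF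

mutual
/-- The numbers appearing in a nested-sequent (in formulas or brackets). -/
def NSeq.jsetT {Pm : MBParams} : NSeq Pm → Set ℝ
  | .node Γ Δ ts =>
      (⋃ A ∈ Γ, MBForm.jsetF A) ∪ (⋃ A ∈ Δ, MBForm.jsetF A) ∪ NSeqs.jsetTs ts
def NSeqs.jsetTs {Pm : MBParams} : NSeqs Pm → Set ℝ
  | .nil => ∅
  | .cons l t ts => insert l.α (t.jsetT ∪ NSeqs.jsetTs ts)
end

/-- `(Γ ⇒ Δ, T)_J`: the numbers appearing in the nested-sequent, with `0` and `1`. -/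
def jset {Pm : MBParams} (t : NSeq Pm) : Set ℝ :=
  insert (0:ℝ) (insert (1:ℝ) t.jsetT)

/-- `U` is an interpolated set of `Js`. -/
def Interpolated (Js U : Set ℝ) : Prop :=
  U.Finite ∧ U ⊆ Set.Icc (0:ℝ) 1 ∧ Js ⊆ U ∧
    ∀ α ∈ Js, ∀ β ∈ Js, α < β → (∀ γ ∈ Js, ¬ (α < γ ∧ γ < β)) →
      ∃! δ, δ ∈ U ∧ α < δ ∧ δ < β

/-- `Suc U α`: the successor of `α` in the interpolated set `U` (with `Suc 1 = 1`). -/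
noncomputable def Suc (U : Set ℝ) (α : ℝ) : ℝ := sInf ((U ∩ Set.Ioi α) ∪ {1})

/-- Auxiliary value of the canonical relation in case `q` is the child of `p`
via a bracket (`β` for `[·]^c_β`, `Suc β` for `[·]^o_β`), and `0` otherwise. -/
noncomputable def lval {Pm : MBParams} (t : NSeq Pm) (U : Set ℝ) (p q : List ℕ) : ℝ :=
  match q.getLast? with
  | none => 0
  | some i =>
      if q.dropLast = p then
        match labelAt t p i with
        | some l => (match l.d with | Side.c => l.α | Side.o => Suc U l.α)
        | none => 0
      else 0

/-- The canonical relation `R_C` (on node addresses). -/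
noncomputable def RC {Pm : MBParams} (t : NSeq Pm) (U : Set ℝ) (p q : List ℕ) : ℝ :=
  if p = q then 1 else max (lval t U p q) (lval t U q p)

/-- The worlds of the canonical model: the nodes of the saturated nested-sequent. -/
def World {Pm : MBParams} (t : NSeq Pm) : Type := {p : List ℕ // IsNode t p}

/-- The canonical relation `R_C`, as a function on the worlds. -/
noncomputable def RCW {Pm : MBParams} (t : NSeq Pm) (U : Set ℝ) (p q : World t) : ℝ :=
  RC t U p.val q.val

/-- The canonical valuation `V_C` of the propositional variables. -/
def VC {Pm : MBParams} (t : NSeq Pm) (n : ℕ) : Set (World t) :=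
  {p | ∃ Γ Δ ts, SubAt t p.val (.node Γ Δ ts) ∧ MBForm.var n ∈ Γ}

/-- `P_C`: the family of all definable sets of worlds of the canonical model. -/
def PC {Pm : MBParams} (t : NSeq Pm) (U : Set ℝ) : Set (Set (World t)) :=
  {X | ∃ A : MBForm Pm, X = MBForm.valR (RCW t U) (VC t) A}


/-! ### Auxiliary infrastructure for the truth lemma -/

section Infra
variable {Pm : MBParams}

theorem sub?_nil (t : NSeq Pm) : t.sub? [] = some t := by cases t; rfl

theorem subs?_eq_get : ∀ (ts : NSeqs Pm) (i : ℕ) (p : List ℕ),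
    NSeqs.subs? ts i p = (match NSeqs.get ts i with
      | some x => x.2.sub? p
      | none => none)
  | .nil, _, _ => rfl
  | .cons _ _ _, 0, _ => rfl
  | .cons _ _ ts, n+1, p => subs?_eq_get ts n p

theorem sub?_of_subAt {t u : NSeq Pm} {p : List ℕ} (h : SubAt t p u) : t.sub? p = some u := by
  induction h with
  | here t => exact sub?_nil t
  | there hget hsub ih =>
    simp only [NSeq.sub?, subs?_eq_get, hget]
    exact ih

theorem subAt_of_sub? : ∀ (p : List ℕ) (t u : NSeq Pm), t.sub? p = some u → SubAt t p u
  | [], t, u, h => by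
      rw [sub?_nil] at h
      rw [Option.some.injEq] at h
      exact h ▸ SubAt.here t
  | (i :: p), .node Γ Δ ts, u, h => by
      simp only [NSeq.sub?, subs?_eq_get] at h
      cases hg : NSeqs.get ts i with
      | none => rw [hg] at h; exact absurd h (by simp)
      | some x =>
          rw [hg] at h
          exact SubAt.there (by rw [hg]) (subAt_of_sub? p x.2 u h)

theorem subAt_iff {t u : NSeq Pm} {p : List ℕ} : SubAt t p u ↔ t.sub? p = some u :=
  ⟨sub?_of_subAt, subAt_of_sub? p t u⟩

theorem subAt_det {t u v : NSeq Pm} {p : List ℕ} (h1 : SubAt t p u) (h2 : SubAt t p v) :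
    u = v := by
  have := (sub?_of_subAt h1).symm.trans (sub?_of_subAt h2)
  exact Option.some.inj this

/-- The top sequent of the node at address `p`. -/
def seqAt (t : NSeq Pm) (p : List ℕ) : Option (Finset (MBForm Pm) × Finset (MBForm Pm)) :=
  (t.sub? p).map (fun u => match u with | .node Γ Δ _ => (Γ, Δ))

theorem seqAt_nil (Γ Δ : Finset (MBForm Pm)) (ts : NSeqs Pm) :
    seqAt (.node Γ Δ ts) [] = some (Γ, Δ) := rfl

theorem seqAt_cons (Γ Δ : Finset (MBForm Pm)) (ts : NSeqs Pm) (j : ℕ) (q : List ℕ) :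
    seqAt (.node Γ Δ ts) (j :: q) = (match NSeqs.get ts j with
      | some x => seqAt x.2 q
      | none => none) := by
  unfold seqAt
  simp only [NSeq.sub?, subs?_eq_get]
  cases NSeqs.get ts j <;> rfl

theorem seqAt_of_subAt {t : NSeq Pm} {p Γ Δ ts} (h : SubAt t p (.node Γ Δ ts)) :
    seqAt t p = some (Γ, Δ) := by
  unfold seqAt
  rw [sub?_of_subAt h]
  rfl

theorem subAt_of_seqAt {t : NSeq Pm} {p Γ Δ} (h : seqAt t p = some (Γ, Δ)) :
    ∃ ts, SubAt t p (.node Γ Δ ts) := by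
  unfold seqAt at h
  cases hs : t.sub? p with
  | none => rw [hs] at h; exact absurd h (by simp)
  | some u =>
      rw [hs] at h
      cases u with
      | node Γ' Δ' ts =>
          simp only [Option.map_some, Option.some.injEq] at h
          obtain ⟨h1, h2⟩ := Prod.mk.injEq .. ▸ h
          subst h1; subst h2
          exact ⟨ts, subAt_of_sub? _ _ _ hs⟩

theorem isNode_iff {t : NSeq Pm} {p : List ℕ} :
    IsNode t p ↔ ∃ Γ Δ, seqAt t p = some (Γ, Δ) := by
  constructor
  · rintro ⟨u, hu⟩
    cases u with
    | node Γ Δ ts => exact ⟨Γ, Δ, seqAt_of_subAt hu⟩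
  · rintro ⟨Γ, Δ, h⟩
    obtain ⟨ts, hts⟩ := subAt_of_seqAt h
    exact ⟨_, hts⟩

theorem labelAt_nil (Γ Δ : Finset (MBForm Pm)) (ts : NSeqs Pm) (i : ℕ) :
    labelAt (.node Γ Δ ts : NSeq Pm) [] i = (NSeqs.get ts i).map Prod.fst := rfl

theorem labelAt_cons (Γ Δ : Finset (MBForm Pm)) (ts : NSeqs Pm) (j : ℕ) (q : List ℕ) (i : ℕ) :
    labelAt (.node Γ Δ ts : NSeq Pm) (j :: q) i = (match NSeqs.get ts j with
      | some x => labelAt x.2 q i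
      | none => none) := by
  unfold labelAt
  simp only [NSeq.sub?, subs?_eq_get]
  cases NSeqs.get ts j with
  | none => rfl
  | some x =>
      cases hx : x.2.sub? q <;> rfl

theorem get_setSeqs : ∀ (ts : NSeqs Pm) (i j : ℕ) (p : List ℕ) (Γ Δ : Finset (MBForm Pm)),
    NSeqs.get (NSeqs.setSeqs ts i p Γ Δ) j =
      if j = i then (NSeqs.get ts i).map (fun x => (x.1, x.2.setSeq p Γ Δ))
      else NSeqs.get ts j
  | .nil, i, j, p, Γ, Δ => by
      simp only [NSeqs.setSeqs, NSeqs.get, Option.map_none]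
      split <;> rfl
  | .cons l t ts, 0, 0, p, Γ, Δ => rfl
  | .cons l t ts, 0, j+1, p, Γ, Δ => by
      simp only [NSeqs.setSeqs, NSeqs.get]
      rw [if_neg (by omega)]
  | .cons l t ts, i+1, 0, p, Γ, Δ => by
      simp only [NSeqs.setSeqs, NSeqs.get]
      rw [if_neg (by omega)]
  | .cons l t ts, i+1, j+1, p, Γ, Δ => by
      simp only [NSeqs.setSeqs, NSeqs.get]
      rw [get_setSeqs ts i j p Γ Δ]
      by_cases h : j = i
      · rw [if_pos h, if_pos (by omega)]
      · rw [if_neg h, if_neg (by omega)]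

theorem seqAt_setSeq : ∀ (p : List ℕ) (t : NSeq Pm) (q : List ℕ) (Γ' Δ' : Finset (MBForm Pm)),
    seqAt (t.setSeq p Γ' Δ') q =
      if q = p then (seqAt t p).map (fun _ => (Γ', Δ')) else seqAt t q
  | [], .node Γ Δ ts, [], Γ', Δ' => by simp [NSeq.setSeq, seqAt_nil]
  | [], .node Γ Δ ts, j :: q', Γ', Δ' => by
      rw [if_neg (by simp)]
      show seqAt (.node Γ' Δ' ts) (j :: q') = _
      rw [seqAt_cons, seqAt_cons]
  | i :: p', .node Γ Δ ts, [], Γ', Δ' => by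
      rw [if_neg (by simp)]
      show seqAt (.node Γ Δ _) [] = _
      rw [seqAt_nil, seqAt_nil]
  | i :: p', .node Γ Δ ts, j :: q', Γ', Δ' => by
      show seqAt (.node Γ Δ (NSeqs.setSeqs ts i p' Γ' Δ')) _ = _
      rw [seqAt_cons, get_setSeqs]
      by_cases hj : j = i
      · subst hj
        rw [if_pos rfl]
        cases hg : NSeqs.get ts j with
        | none =>
            rw [seqAt_cons, seqAt_cons, hg]
            simp only [Option.map_none]
            split <;> rfl
        | some x =>
            simp only [Option.map_some]
            rw [seqAt_setSeq p' x.2 q' Γ' Δ']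
            rw [seqAt_cons, seqAt_cons, hg]
            by_cases hq : q' = p'
            · rw [if_pos hq, if_pos (by rw [hq])]
            · rw [if_neg hq, if_neg (by simp [hq])]
      · rw [if_neg hj, if_neg (by simp [hj])]
        rw [seqAt_cons]

theorem labelAt_setSeq : ∀ (p : List ℕ) (t : NSeq Pm) (q : List ℕ) (i : ℕ)
    (Γ' Δ' : Finset (MBForm Pm)),
    labelAt (t.setSeq p Γ' Δ') q i = labelAt t q i
  | [], .node Γ Δ ts, [], i, Γ', Δ' => rfl
  | [], .node Γ Δ ts, j :: q', i, Γ', Δ' => by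
      show labelAt (.node Γ' Δ' ts : NSeq Pm) _ _ = _
      rw [labelAt_cons, labelAt_cons]
  | p0 :: p', .node Γ Δ ts, [], i, Γ', Δ' => by
      show labelAt (.node Γ Δ (NSeqs.setSeqs ts p0 p' Γ' Δ') : NSeq Pm) [] i = _
      rw [labelAt_nil, labelAt_nil, get_setSeqs]
      by_cases h : i = p0
      · subst h; rw [if_pos rfl]; cases NSeqs.get ts i <;> rfl
      · rw [if_neg h]
  | p0 :: p', .node Γ Δ ts, j :: q', i, Γ', Δ' => by
      show labelAt (.node Γ Δ (NSeqs.setSeqs ts p0 p' Γ' Δ') : NSeq Pm) _ _ = _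
      rw [labelAt_cons, labelAt_cons, get_setSeqs]
      by_cases h : j = p0
      · subst h
        rw [if_pos rfl]
        cases hg : NSeqs.get ts j with
        | none => rfl
        | some x =>
            simp only [Option.map_some]
            exact labelAt_setSeq p' x.2 q' i Γ' Δ'
      · rw [if_neg h]

/-- If the sequent at `p` is replaced by itself, nothing changes. -/
theorem setSeqs_self : ∀ (ts : NSeqs Pm) (i : ℕ) (l : MBLab Pm) (u : NSeq Pm)
    (p : List ℕ) (Γ Δ : Finset (MBForm Pm)),
    NSeqs.get ts i = some (l, u) → u.setSeq p Γ Δ = u →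
    NSeqs.setSeqs ts i p Γ Δ = ts
  | .nil, i, l, u, p, Γ, Δ, h, _ => by simp [NSeqs.get] at h
  | .cons l' t ts, 0, l, u, p, Γ, Δ, h, he => by
      simp only [NSeqs.get, Option.some.injEq] at h
      obtain ⟨h1, h2⟩ := Prod.mk.injEq .. ▸ h
      subst h1; subst h2
      simp only [NSeqs.setSeqs, he]
  | .cons l' t ts, i+1, l, u, p, Γ, Δ, h, he => by
      simp only [NSeqs.get] at h
      simp only [NSeqs.setSeqs, setSeqs_self ts i l u p Γ Δ h he]

theorem setSeq_self' : ∀ {t u : NSeq Pm} {p}, SubAt t p u →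
    ∀ {Γ Δ : Finset (MBForm Pm)} {ts : NSeqs Pm}, u = .node Γ Δ ts → t.setSeq p Γ Δ = t := by
  intro t u p h
  induction h with
  | here t => intro Γ Δ ts he; subst he; rfl
  | there hget hsub ih =>
      intro Γ Δ ts he
      simp only [NSeq.setSeq]
      rw [setSeqs_self _ _ _ _ _ _ _ hget (ih he)]

theorem setSeq_self {t : NSeq Pm} {p : List ℕ} {Γ Δ : Finset (MBForm Pm)} {ts : NSeqs Pm}
    (h : SubAt t p (.node Γ Δ ts)) : t.setSeq p Γ Δ = t := setSeq_self' h rfl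

/-- Length of a children list. -/
def NSeqs.len : NSeqs Pm → ℕ
  | .nil => 0
  | .cons _ _ ts => ts.len + 1

theorem get_len : ∀ ts : NSeqs Pm, NSeqs.get ts ts.len = none
  | .nil => rfl
  | .cons _ _ ts => get_len ts

theorem ne_len_of_get {ts : NSeqs Pm} {j : ℕ} {x} (h : NSeqs.get ts j = some x) :
    j ≠ ts.len := fun hj => by rw [hj, get_len] at h; exact absurd h (by simp)

theorem get_snoc : ∀ (ts : NSeqs Pm) (l : MBLab Pm) (u : NSeq Pm) (j : ℕ),
    NSeqs.get (ts.snoc l u) j = if j = ts.len then some (l, u) else NSeqs.get ts j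
  | .nil, l, u, 0 => rfl
  | .nil, l, u, j+1 => by
      simp only [NSeqs.snoc, NSeqs.get, NSeqs.len]
      exact (if_neg (by omega)).symm
  | .cons l' t ts, l, u, 0 => by
      simp only [NSeqs.snoc, NSeqs.get, NSeqs.len]
      exact (if_neg (by omega)).symm
  | .cons l' t ts, l, u, j+1 => by
      simp only [NSeqs.snoc, NSeqs.get, NSeqs.len, get_snoc ts l u j]
      by_cases h : j = ts.len
      · rw [if_pos h]; exact (if_pos (by omega)).symm
      · rw [if_neg h]; exact (if_neg (by omega)).symm

theorem get_addChilds : ∀ (ts : NSeqs Pm) (i j : ℕ) (p : List ℕ) (l : MBLab Pm) (u : NSeq Pm),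
    NSeqs.get (NSeqs.addChilds ts i p l u) j =
      if j = i then (NSeqs.get ts i).map (fun x => (x.1, x.2.addChild p l u))
      else NSeqs.get ts j
  | .nil, i, j, p, l, u => by
      simp only [NSeqs.addChilds, NSeqs.get, Option.map_none]
      split <;> rfl
  | .cons l' t ts, 0, 0, p, l, u => rfl
  | .cons l' t ts, 0, j+1, p, l, u => by
      simp only [NSeqs.addChilds, NSeqs.get]
      rw [if_neg (by omega)]
  | .cons l' t ts, i+1, 0, p, l, u => by
      simp only [NSeqs.addChilds, NSeqs.get]
      rw [if_neg (by omega)]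
  | .cons l' t ts, i+1, j+1, p, l, u => by
      simp only [NSeqs.addChilds, NSeqs.get]
      rw [get_addChilds ts i j p l u]
      by_cases h : j = i
      · rw [if_pos h, if_pos (by omega)]
      · rw [if_neg h, if_neg (by omega)]

theorem seqAt_addChild_old : ∀ (p : List ℕ) (t : NSeq Pm) (l : MBLab Pm) (u : NSeq Pm)
    (q : List ℕ) (x : Finset (MBForm Pm) × Finset (MBForm Pm)),
    seqAt t q = some x → seqAt (t.addChild p l u) q = some x
  | [], .node Γ Δ ts, l, u, [], x, h => h
  | [], .node Γ Δ ts, l, u, j :: q', x, h => by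
      rw [seqAt_cons] at h
      show seqAt (.node Γ Δ (ts.snoc l u)) _ = _
      rw [seqAt_cons, get_snoc]
      cases hg : NSeqs.get ts j with
      | none => rw [hg] at h; exact absurd h (by simp)
      | some y =>
          rw [hg] at h
          rw [if_neg (ne_len_of_get hg)]
          exact h
  | i :: p', .node Γ Δ ts, l, u, [], x, h => h
  | i :: p', .node Γ Δ ts, l, u, j :: q', x, h => by
      rw [seqAt_cons] at h
      show seqAt (.node Γ Δ (NSeqs.addChilds ts i p' l u)) _ = _
      rw [seqAt_cons, get_addChilds]
      by_cases hj : j = i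
      · subst hj
        rw [if_pos rfl]
        cases hg : NSeqs.get ts j with
        | none => rw [hg] at h; exact absurd h (by simp)
        | some y =>
            rw [hg] at h
            simp only [Option.map_some]
            exact seqAt_addChild_old p' y.2 l u q' x h
      · rw [if_neg hj]
        cases hg : NSeqs.get ts j with
        | none => rw [hg] at h; exact absurd h (by simp)
        | some y => rw [hg] at h; exact h

theorem labelAt_addChild_old : ∀ (p : List ℕ) (t : NSeq Pm) (l : MBLab Pm) (u : NSeq Pm)
    (q : List ℕ) (i : ℕ) (l' : MBLab Pm),
    labelAt t q i = some l' → labelAt (t.addChild p l u) q i = some l'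
  | [], .node Γ Δ ts, l, u, [], i, l', h => by
      rw [labelAt_nil] at h
      show labelAt (.node Γ Δ (ts.snoc l u) : NSeq Pm) [] i = _
      rw [labelAt_nil, get_snoc]
      cases hg : NSeqs.get ts i with
      | none => rw [hg] at h; exact absurd h (by simp)
      | some y =>
          rw [hg] at h
          rw [if_neg (ne_len_of_get hg)]
          exact h
  | [], .node Γ Δ ts, l, u, j :: q', i, l', h => by
      rw [labelAt_cons] at h
      show labelAt (.node Γ Δ (ts.snoc l u) : NSeq Pm) _ _ = _
      rw [labelAt_cons, get_snoc]
      cases hg : NSeqs.get ts j with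
      | none => rw [hg] at h; exact absurd h (by simp)
      | some y =>
          rw [hg] at h
          rw [if_neg (ne_len_of_get hg)]
          exact h
  | i0 :: p', .node Γ Δ ts, l, u, [], i, l', h => by
      rw [labelAt_nil] at h
      show labelAt (.node Γ Δ (NSeqs.addChilds ts i0 p' l u) : NSeq Pm) [] i = _
      rw [labelAt_nil, get_addChilds]
      by_cases hj : i = i0
      · subst hj
        rw [if_pos rfl]
        cases hg : NSeqs.get ts i with
        | none => rw [hg] at h; exact absurd h (by simp)
        | some y => rw [hg] at h; exact h
      · rw [if_neg hj]; exact h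
  | i0 :: p', .node Γ Δ ts, l, u, j :: q', i, l', h => by
      rw [labelAt_cons] at h
      show labelAt (.node Γ Δ (NSeqs.addChilds ts i0 p' l u) : NSeq Pm) _ _ = _
      rw [labelAt_cons, get_addChilds]
      by_cases hj : j = i0
      · subst hj
        rw [if_pos rfl]
        cases hg : NSeqs.get ts j with
        | none => rw [hg] at h; exact absurd h (by simp)
        | some y =>
            rw [hg] at h
            simp only [Option.map_some]
            exact labelAt_addChild_old p' y.2 l u q' i l' h
      · rw [if_neg hj]
        cases hg : NSeqs.get ts j with
        | none => rw [hg] at h; exact absurd h (by simp)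
        | some y => rw [hg] at h; exact h

theorem seqAt_addChild_new : ∀ (p : List ℕ) (t : NSeq Pm) (l : MBLab Pm) (u : NSeq Pm)
    (Γ Δ : Finset (MBForm Pm)) (ts : NSeqs Pm),
    t.sub? p = some (.node Γ Δ ts) →
    seqAt (t.addChild p l u) (p ++ [ts.len]) = seqAt u []
  | [], t, l, u, Γ, Δ, ts, h => by
      rw [sub?_nil, Option.some.injEq] at h
      subst h
      show seqAt (.node Γ Δ (ts.snoc l u)) [ts.len] = _
      rw [seqAt_cons, get_snoc, if_pos rfl]
  | i :: p', .node Γ0 Δ0 ts0, l, u, Γ, Δ, ts, h => by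
      simp only [NSeq.sub?, subs?_eq_get] at h
      cases hg : NSeqs.get ts0 i with
      | none => rw [hg] at h; exact absurd h (by simp)
      | some y =>
          rw [hg] at h
          show seqAt (.node Γ0 Δ0 (NSeqs.addChilds ts0 i p' l u)) (i :: (p' ++ [ts.len])) = _
          rw [seqAt_cons, get_addChilds, if_pos rfl, hg]
          simp only [Option.map_some]
          exact seqAt_addChild_new p' y.2 l u Γ Δ ts h

theorem labelAt_addChild_new : ∀ (p : List ℕ) (t : NSeq Pm) (l : MBLab Pm) (u : NSeq Pm)
    (Γ Δ : Finset (MBForm Pm)) (ts : NSeqs Pm),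
    t.sub? p = some (.node Γ Δ ts) →
    labelAt (t.addChild p l u) p ts.len = some l
  | [], t, l, u, Γ, Δ, ts, h => by
      rw [sub?_nil, Option.some.injEq] at h
      subst h
      show labelAt (.node Γ Δ (ts.snoc l u) : NSeq Pm) [] ts.len = _
      rw [labelAt_nil, get_snoc, if_pos rfl]
      rfl
  | i :: p', .node Γ0 Δ0 ts0, l, u, Γ, Δ, ts, h => by
      simp only [NSeq.sub?, subs?_eq_get] at h
      cases hg : NSeqs.get ts0 i with
      | none => rw [hg] at h; exact absurd h (by simp)
      | some y =>
          rw [hg] at h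
          show labelAt (.node Γ0 Δ0 (NSeqs.addChilds ts0 i p' l u) : NSeq Pm) (i :: p') ts.len = _
          rw [labelAt_cons, get_addChilds, if_pos rfl, hg]
          simp only [Option.map_some]
          exact labelAt_addChild_new p' y.2 l u Γ Δ ts h

/-! #### `jset` lemmas -/

theorem jsetF_finite : ∀ A : MBForm Pm, A.jsetF.Finite
  | .var _ => Set.finite_empty
  | .top => Set.finite_empty
  | .bot => Set.finite_empty
  | .neg A => jsetF_finite A
  | .conj A B => (jsetF_finite A).union (jsetF_finite B)
  | .boxc _ A => (jsetF_finite A).insert _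
  | .boxo _ A => (jsetF_finite A).insert _

mutual
theorem jsetT_finite : ∀ t : NSeq Pm, t.jsetT.Finite
  | .node Γ Δ ts =>
      ((Set.Finite.biUnion Γ.finite_toSet (fun A _ => jsetF_finite A)).union
        (Set.Finite.biUnion Δ.finite_toSet (fun A _ => jsetF_finite A))).union
        (jsetTs_finite ts)
theorem jsetTs_finite : ∀ ts : NSeqs Pm, (NSeqs.jsetTs ts).Finite
  | .nil => Set.finite_empty
  | .cons l t ts => ((jsetT_finite t).union (jsetTs_finite ts)).insert _
end

theorem jset_finite (t : NSeq Pm) : (jset t).Finite :=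
  ((jsetT_finite t).insert _).insert _

theorem mem_jsetTs_of_get : ∀ (ts : NSeqs Pm) (i : ℕ) (l : MBLab Pm) (u : NSeq Pm),
    NSeqs.get ts i = some (l, u) →
    l.α ∈ NSeqs.jsetTs ts ∧ u.jsetT ⊆ NSeqs.jsetTs ts
  | .nil, i, l, u, h => by simp [NSeqs.get] at h
  | .cons l' t ts, 0, l, u, h => by
      simp only [NSeqs.get, Option.some.injEq] at h
      obtain ⟨h1, h2⟩ := Prod.mk.injEq .. ▸ h
      subst h1; subst h2
      constructor
      · exact Set.mem_insert _ _
      · intro x hx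
        exact Set.mem_insert_of_mem _ (Set.mem_union_left _ hx)
  | .cons l' t ts, i+1, l, u, h => by
      simp only [NSeqs.get] at h
      obtain ⟨h1, h2⟩ := mem_jsetTs_of_get ts i l u h
      constructor
      · exact Set.mem_insert_of_mem _ (Set.mem_union_right _ h1)
      · intro x hx
        exact Set.mem_insert_of_mem _ (Set.mem_union_right _ (h2 hx))

theorem jsetTs_subset_jsetT (Γ Δ : Finset (MBForm Pm)) (ts : NSeqs Pm) :
    NSeqs.jsetTs ts ⊆ (NSeq.node Γ Δ ts).jsetT := fun x hx => Set.mem_union_right _ hx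

theorem label_mem_jsetT : ∀ (p : List ℕ) (t : NSeq Pm) (i : ℕ) (l : MBLab Pm),
    labelAt t p i = some l → l.α ∈ t.jsetT
  | [], .node Γ Δ ts, i, l, h => by
      rw [labelAt_nil] at h
      obtain ⟨y, hy, hyl⟩ := Option.map_eq_some_iff.mp h
      have := (mem_jsetTs_of_get ts i y.1 y.2 (by rw [hy])).1
      rw [hyl] at this
      exact jsetTs_subset_jsetT Γ Δ ts this
  | j :: p', .node Γ Δ ts, i, l, h => by
      rw [labelAt_cons] at h
      cases hg : NSeqs.get ts j with
      | none => rw [hg] at h; exact absurd h (by simp)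
      | some y =>
          rw [hg] at h
          have := label_mem_jsetT p' y.2 i l h
          exact jsetTs_subset_jsetT Γ Δ ts
            ((mem_jsetTs_of_get ts j y.1 y.2 (by rw [hg])).2 this)

theorem form_mem_jsetT' {t u : NSeq Pm} {p} (h : SubAt t p u) :
    ∀ {Γ Δ ts}, u = .node Γ Δ ts → ∀ (A : MBForm Pm), (A ∈ Γ ∨ A ∈ Δ) → A.jsetF ⊆ t.jsetT := by
  induction h with
  | here t =>
      rintro Γ Δ ts rfl A hA x hx
      rcases hA with hA | hA
      · exact Set.mem_union_left _ (Set.mem_union_left _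
          (Set.mem_biUnion hA hx))
      · exact Set.mem_union_left _ (Set.mem_union_right _
          (Set.mem_biUnion hA hx))
  | there hget hsub ih =>
      rintro Γ Δ ts rfl A hA x hx
      exact jsetTs_subset_jsetT _ _ _
        ((mem_jsetTs_of_get _ _ _ _ hget).2 (ih rfl A hA hx))

theorem form_mem_jsetT {t : NSeq Pm} {p Γ Δ ts} (h : SubAt t p (.node Γ Δ ts))
    (A : MBForm Pm) (hA : A ∈ Γ ∨ A ∈ Δ) : A.jsetF ⊆ t.jsetT :=
  form_mem_jsetT' h rfl A hA

theorem jsetT_subset_jset (t : NSeq Pm) : t.jsetT ⊆ jset t := fun x hx =>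
  Set.mem_insert_of_mem _ (Set.mem_insert_of_mem _ hx)

theorem alpha_mem_jsetF (d : Side) (α : Pm.J) (A : MBForm Pm) :
    (α : ℝ) ∈ (mkBox d α A).jsetF := by
  cases d <;> exact Set.mem_insert _ _

/-! #### `Suc` lemmas -/

theorem Suc_spec {U : Set ℝ} (hUf : U.Finite) (β : ℝ) :
    Suc U β ∈ (U ∩ Set.Ioi β) ∪ {1} :=
  Set.Nonempty.csInf_mem ⟨1, Or.inr rfl⟩ ((hUf.inter_of_left _).union (Set.finite_singleton 1))

theorem Suc_gt {U : Set ℝ} (hUf : U.Finite) {β : ℝ} (hβ : β < 1) : β < Suc U β := by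
  rcases Suc_spec hUf β with h | h
  · exact h.2
  · rw [Set.mem_singleton_iff] at h; rw [h]; exact hβ

theorem Suc_le {U : Set ℝ} (hUf : U.Finite) {x β : ℝ} (hx : x ∈ U) (hβx : β < x) :
    Suc U β ≤ x :=
  csInf_le ((hUf.inter_of_left _).union (Set.finite_singleton 1)).bddBelow
    (Or.inl ⟨hx, hβx⟩)

theorem Suc_nonneg {U : Set ℝ} (hUf : U.Finite) (hUI : U ⊆ Set.Icc (0:ℝ) 1) (β : ℝ) :
    0 ≤ Suc U β := by
  rcases Suc_spec hUf β with h | h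
  · exact (hUI h.1).1
  · rw [Set.mem_singleton_iff] at h; rw [h]; norm_num

theorem Suc_le_one {U : Set ℝ} (hUf : U.Finite) (β : ℝ) : Suc U β ≤ 1 :=
  csInf_le ((hUf.inter_of_left _).union (Set.finite_singleton 1)).bddBelow (Or.inr rfl)

theorem le_of_lt_Suc {Js U : Set ℝ} (hUf : U.Finite) (hJU : Js ⊆ U) {α β : ℝ}
    (hα : α ∈ Js) (h : α < Suc U β) : α ≤ β := by
  by_contra hc
  push_neg at hc
  exact absurd (Suc_le hUf (hJU hα) hc) (not_le.mpr h)

theorem le_of_le_Suc {Js U : Set ℝ} (hJf : Js.Finite) (hUf : U.Finite) (hJU : Js ⊆ U)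
    (hint : ∀ α ∈ Js, ∀ β ∈ Js, α < β → (∀ γ ∈ Js, ¬(α < γ ∧ γ < β)) →
      ∃! δ, δ ∈ U ∧ α < δ ∧ δ < β)
    {α β : ℝ} (hα : α ∈ Js) (hβ : β ∈ Js) (h1 : (1:ℝ) ∈ Js) (hβ1 : β < 1)
    (h : α ≤ Suc U β) : α ≤ β := by
  by_contra hc
  push_neg at hc
  have hTne : (Js ∩ Set.Ioi β).Nonempty := ⟨1, h1, hβ1⟩
  have hTf : (Js ∩ Set.Ioi β).Finite := hJf.inter_of_left _
  have hγT := hTne.csInf_mem hTf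
  have hγmin : ∀ x ∈ Js ∩ Set.Ioi β, sInf (Js ∩ Set.Ioi β) ≤ x :=
    fun x hx => csInf_le hTf.bddBelow hx
  obtain ⟨δ, ⟨hδU, hβδ, hδγ⟩, -⟩ :=
    hint β hβ _ hγT.1 hγT.2
      (fun c hcJ hcc => absurd (hγmin c ⟨hcJ, hcc.1⟩) (not_le.mpr hcc.2))
  have hSδ : Suc U β ≤ δ := Suc_le hUf hδU hβδ
  have hγα : sInf (Js ∩ Set.Ioi β) ≤ α := hγmin α ⟨hα, hc⟩
  linarith

/-! #### `lval` and `RC` lemmas -/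

/-- The value assigned by a label. -/
noncomputable def labVal (U : Set ℝ) (l : MBLab Pm) : ℝ :=
  match l.d with
  | Side.c => l.α
  | Side.o => Suc U l.α

theorem lval_concat {t : NSeq Pm} {U : Set ℝ} {p : List ℕ} {i : ℕ} {l : MBLab Pm}
    (h : labelAt t p i = some l) : lval t U p (p ++ [i]) = labVal U l := by
  unfold lval
  rw [List.getLast?_concat, List.dropLast_concat]
  simp [h, labVal]

theorem lval_concat_rev (t : NSeq Pm) (U : Set ℝ) (p : List ℕ) (i : ℕ) :
    lval t U (p ++ [i]) p = 0 := by
  unfold lval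
  cases hg : p.getLast? with
  | none => rfl
  | some j =>
      have hne : p ≠ [] := by
        intro he; rw [he] at hg; exact absurd hg (by simp)
      have hd : p.dropLast ≠ p ++ [i] := by
        intro he
        have h3 := congrArg List.length he
        rw [List.length_dropLast, List.length_append] at h3
        have hlp : 1 ≤ p.length := by
          cases p with
          | nil => exact absurd rfl hne
          | cons a as => simp
        omega
      simp [hd]

theorem lval_cases (t : NSeq Pm) (U : Set ℝ) (p q : List ℕ) :
    lval t U p q = 0 ∨ ∃ i l, q = p ++ [i] ∧ labelAt t p i = some l ∧
      lval t U p q = labVal U l := by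
  unfold lval
  cases hg : q.getLast? with
  | none => exact Or.inl rfl
  | some i =>
      by_cases hd : q.dropLast = p
      · have hne : q ≠ [] := by
          intro he; rw [he] at hg; exact absurd hg (by simp)
        have hq : q = p ++ [i] := by
          have h2 := List.dropLast_append_getLast hne
          rw [List.getLast?_eq_getLast hne, Option.some.injEq] at hg
          rw [← h2, hd, hg]
        cases hl : labelAt t p i with
        | none => left; simp [hd, hl]
        | some l =>
            refine Or.inr ⟨i, l, hq, hl, ?_⟩
            simp [hd, hl, labVal]
      · left; simp [hd]

theorem lval_nonneg {Pm : MBParams} (t : NSeq Pm) {U : Set ℝ} (hUf : U.Finite)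
    (hUI : U ⊆ Set.Icc (0:ℝ) 1) (p q : List ℕ) : 0 ≤ lval t U p q := by
  rcases lval_cases t U p q with h | ⟨i, l, _, hl, h⟩
  · rw [h]
  · rw [h]
    unfold labVal
    cases l.d
    · exact (Pm.subI l.memJ).1
    · exact Suc_nonneg hUf hUI _

theorem RC_self (t : NSeq Pm) (U : Set ℝ) (p : List ℕ) : RC t U p p = 1 := by
  simp [RC]

theorem RC_child {t : NSeq Pm} {U : Set ℝ} {p : List ℕ} {i : ℕ} {l : MBLab Pm}
    (hUf : U.Finite) (hUI : U ⊆ Set.Icc (0:ℝ) 1)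
    (h : labelAt t p i = some l) : RC t U p (p ++ [i]) = labVal U l := by
  have hne : p ≠ p ++ [i] := by
    intro he; have := congrArg List.length he; simp at this
  unfold RC
  rw [if_neg hne, lval_concat h, lval_concat_rev]
  refine max_eq_left ?_
  rw [← lval_concat (U := U) h]
  exact lval_nonneg t hUf hUI p (p ++ [i])

theorem labVal_nonneg {Pm : MBParams} {U : Set ℝ} (hUf : U.Finite)
    (hUI : U ⊆ Set.Icc (0:ℝ) 1) (l : MBLab Pm) : 0 ≤ labVal U l := by
  unfold labVal
  cases l.d
  · exact (Pm.subI l.memJ).1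
  · exact Suc_nonneg hUf hUI _

theorem setSeq_fixed {t : NSeq Pm} {p Γ Δ ts Γ' Δ'} (h : SubAt t p (.node Γ Δ ts))
    (he : t.setSeq p Γ' Δ' = t) : Γ' = Γ ∧ Δ' = Δ := by
  have h1 := seqAt_setSeq p t p Γ' Δ'
  rw [he, seqAt_of_subAt h, if_pos rfl] at h1
  simp only [Option.map_some, Option.some.injEq, Prod.mk.injEq] at h1
  exact ⟨h1.1.symm, h1.2.symm⟩

theorem sat_eq {t : NSeq Pm} {D} (hsat : Saturated (t, D)) {p Γ Δ ts Γ₁ Δ₁}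
    (hsub : SubAt t p (.node Γ Δ ts))
    (hstep : SatStep (t, D) (t.setSeq p Γ₁ Δ₁, D)) : Γ₁ = Γ ∧ Δ₁ = Δ := by
  have h := hsat _ hstep
  exact setSeq_fixed hsub (congrArg Prod.fst h)

theorem lbox_eq (α : Pm.J) (hne : (α:ℝ) ≠ 1) (d : Side) (A : MBForm Pm) :
    (MBLab.mk (α:ℝ) α.2 hne d).box A = mkBox d α A := by
  cases d <;> rfl

theorem mkBox_inj {d d' : Side} {α α' : Pm.J} {A A' : MBForm Pm}
    (h : mkBox d α A = mkBox d' α' A') : d = d' ∧ α = α' ∧ A = A' := by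
  cases d <;> cases d' <;> simp [mkBox] at h ⊢ <;> tauto

theorem get_of_labelAt {t : NSeq Pm} {p i l Γ Δ ts} (hsub : SubAt t p (.node Γ Δ ts))
    (hl : labelAt t p i = some l) : ∃ u, NSeqs.get ts i = some (l, u) := by
  unfold labelAt at hl
  rw [sub?_of_subAt hsub] at hl
  obtain ⟨y, hy, hyl⟩ := Option.map_eq_some_iff.mp hl
  exact ⟨y.2, by rw [hy, ← hyl]⟩

/-! #### Preservation of unprovability and box-invariant along saturation -/

theorem unprov_step {a b : NSeq Pm × Set (List ℕ × MBForm Pm)} (h : SatStep a b)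
    (hnp : ¬ Provable true a.1) : ¬ Provable true b.1 := by
  intro hp
  apply hnp
  cases h with
  | andL hsub hmem =>
      have h2 := Provable.andL hsub hp
      rwa [Finset.insert_eq_self.mpr hmem, setSeq_self hsub] at h2
  | andR hsub hmem hC hnp2 => exact absurd hp hnp2
  | negL hsub hmem =>
      have h2 := Provable.negL hsub hp
      rwa [Finset.insert_eq_self.mpr hmem, setSeq_self hsub] at h2
  | negR hsub hmem =>
      have h2 := Provable.negR hsub hp
      rwa [Finset.insert_eq_self.mpr hmem, setSeq_self hsub] at h2
  | boxL hsub hget hsub' hpleq hmem =>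
      have h2 := Provable.boxL hsub hget hsub' hpleq hp
      rwa [Finset.insert_eq_self.mpr hmem, setSeq_self hsub] at h2
  | boxLsym hsub hget hsub' hpleq hmem =>
      have h2 := Provable.boxLsym hsub hget hsub' hpleq hp
      rwa [Finset.insert_eq_self.mpr hmem, setSeq_self hsub'] at h2
  | boxLself hsub hcond hmem =>
      have h2 := Provable.boxLself hsub hcond hp
      rwa [Finset.insert_eq_self.mpr hmem, setSeq_self hsub] at h2
  | boxR hne hsub hmem hD =>
      have h2 := Provable.boxR hsub hp
      rwa [lbox_eq, Finset.insert_eq_self.mpr hmem, setSeq_self hsub] at h2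
  | boxRself hsub hmem =>
      have h2 := Provable.boxRself hsub hp
      rwa [Finset.insert_eq_self.mpr hmem, setSeq_self hsub] at h2
  | boxC0 hsub hmem hsub'' =>
      have h2 := Provable.boxC0 hsub'' hsub hp
      rwa [Finset.insert_eq_self.mpr hmem, setSeq_self hsub] at h2

theorem unprov_rtg {a b : NSeq Pm × Set (List ℕ × MBForm Pm)}
    (h : Relation.ReflTransGen SatStep a b) (hnp : ¬ Provable true a.1) :
    ¬ Provable true b.1 := by
  induction h with
  | refl => exact hnp
  | tail _ hstep ih => exact unprov_step hstep ih

theorem seq_mono_setSeq {t : NSeq Pm} {p₀ : List ℕ} {Γ₀ Δ₀ : Finset (MBForm Pm)}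
    {ts₀ : NSeqs Pm} {Γ₁ Δ₁ : Finset (MBForm Pm)}
    (hsub : SubAt t p₀ (.node Γ₀ Δ₀ ts₀)) (hΓ : Γ₀ ⊆ Γ₁) (hΔ : Δ₀ ⊆ Δ₁)
    {q Γ Δ} (hq : seqAt t q = some (Γ, Δ)) :
    ∃ Γ' Δ', seqAt (t.setSeq p₀ Γ₁ Δ₁) q = some (Γ', Δ') ∧ Γ ⊆ Γ' ∧ Δ ⊆ Δ' := by
  rw [seqAt_setSeq]
  by_cases h : q = p₀
  · subst h
    rw [if_pos rfl, seqAt_of_subAt hsub]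
    rw [seqAt_of_subAt hsub, Option.some.injEq, Prod.mk.injEq] at hq
    exact ⟨Γ₁, Δ₁, rfl, hq.1 ▸ hΓ, hq.2 ▸ hΔ⟩
  · rw [if_neg h]
    exact ⟨Γ, Δ, hq, subset_refl _, subset_refl _⟩

theorem step_seq_mono {a b : NSeq Pm × Set (List ℕ × MBForm Pm)} (h : SatStep a b)
    {q Γ Δ} (hq : seqAt a.1 q = some (Γ, Δ)) :
    ∃ Γ' Δ', seqAt b.1 q = some (Γ', Δ') ∧ Γ ⊆ Γ' ∧ Δ ⊆ Δ' := by
  have hsub1 : ∀ (X : MBForm Pm) (S : Finset (MBForm Pm)), S ⊆ insert X S :=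
    fun X S => Finset.subset_insert X S
  have hsub2 : ∀ (X Y : MBForm Pm) (S : Finset (MBForm Pm)), S ⊆ insert X (insert Y S) :=
    fun X Y S => (Finset.subset_insert Y S).trans (Finset.subset_insert X _)
  cases h with
  | andL hsub hmem => exact seq_mono_setSeq hsub (hsub2 _ _ _) (subset_refl _) hq
  | andR hsub hmem hC hnp2 => exact seq_mono_setSeq hsub (subset_refl _) (hsub1 _ _) hq
  | negL hsub hmem => exact seq_mono_setSeq hsub (subset_refl _) (hsub1 _ _) hq
  | negR hsub hmem => exact seq_mono_setSeq hsub (hsub1 _ _) (subset_refl _) hq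
  | boxL hsub hget hsub' hpleq hmem =>
      exact seq_mono_setSeq hsub' (hsub1 _ _) (subset_refl _) hq
  | boxLsym hsub hget hsub' hpleq hmem =>
      exact seq_mono_setSeq hsub (hsub1 _ _) (subset_refl _) hq
  | boxLself hsub hcond hmem => exact seq_mono_setSeq hsub (hsub1 _ _) (subset_refl _) hq
  | boxR hne hsub hmem hD =>
      exact ⟨Γ, Δ, seqAt_addChild_old _ _ _ _ _ _ hq, subset_refl _, subset_refl _⟩
  | boxRself hsub hmem => exact seq_mono_setSeq hsub (subset_refl _) (hsub1 _ _) hq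
  | boxC0 hsub hmem hsub'' => exact seq_mono_setSeq hsub'' (hsub1 _ _) (subset_refl _) hq

theorem step_label {a b : NSeq Pm × Set (List ℕ × MBForm Pm)} (h : SatStep a b)
    {q i l} (hl : labelAt a.1 q i = some l) : labelAt b.1 q i = some l := by
  cases h with
  | andL hsub hmem => rw [labelAt_setSeq]; exact hl
  | andR hsub hmem hC hnp2 => rw [labelAt_setSeq]; exact hl
  | negL hsub hmem => rw [labelAt_setSeq]; exact hl
  | negR hsub hmem => rw [labelAt_setSeq]; exact hl
  | boxL hsub hget hsub' hpleq hmem => rw [labelAt_setSeq]; exact hl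
  | boxLsym hsub hget hsub' hpleq hmem => rw [labelAt_setSeq]; exact hl
  | boxLself hsub hcond hmem => rw [labelAt_setSeq]; exact hl
  | boxR hne hsub hmem hD => exact labelAt_addChild_old _ _ _ _ _ _ _ hl
  | boxRself hsub hmem => rw [labelAt_setSeq]; exact hl
  | boxC0 hsub hmem hsub'' => rw [labelAt_setSeq]; exact hl

/-- The invariant maintained by step (8) of the saturation: every processed
right-hand boxed formula has an attached child bracket containing the boxed
formula's body on the right. -/
def BoxInv (s : NSeq Pm × Set (List ℕ × MBForm Pm)) : Prop :=
  ∀ p (d : Side) (α : Pm.J) (A : MBForm Pm), (p, mkBox d α A) ∈ s.2 →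
    ∃ (m : ℕ) (l : MBLab Pm) (Γ' Δ' : Finset (MBForm Pm)), labelAt s.1 p m = some l ∧ l.α = (α:ℝ) ∧ l.d = d ∧
      seqAt s.1 (p ++ [m]) = some (Γ', Δ') ∧ A ∈ Δ'

theorem boxInv_step {a b : NSeq Pm × Set (List ℕ × MBForm Pm)} (hstep : SatStep a b)
    (hinv : BoxInv a) : BoxInv b := by
  have lift : ∀ p (d : Side) (α : Pm.J) (A : MBForm Pm), (p, mkBox d α A) ∈ a.2 →
      ∃ (m : ℕ) (l : MBLab Pm) (Γ' Δ' : Finset (MBForm Pm)), labelAt b.1 p m = some l ∧ l.α = (α:ℝ) ∧ l.d = d ∧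
        seqAt b.1 (p ++ [m]) = some (Γ', Δ') ∧ A ∈ Δ' := by
    intro p d α A hmem
    obtain ⟨m, l, Γ', Δ', h1, h2, h3, h4, h5⟩ := hinv p d α A hmem
    obtain ⟨Γ'', Δ'', h6, h7, h8⟩ := step_seq_mono hstep h4
    exact ⟨m, l, Γ'', Δ'', step_label hstep h1, h2, h3, h6, h8 h5⟩
  intro p d α A hmem
  have hc := hstep
  cases hc with
  | andL hsub hmem' => exact lift p d α A hmem
  | andR hsub hmem' hC hnp2 => exact lift p d α A hmem
  | negL hsub hmem' => exact lift p d α A hmem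
  | negR hsub hmem' => exact lift p d α A hmem
  | boxL hsub hget hsub' hpleq hmem' => exact lift p d α A hmem
  | boxLsym hsub hget hsub' hpleq hmem' => exact lift p d α A hmem
  | boxLself hsub hcond hmem' => exact lift p d α A hmem
  | boxRself hsub hmem' => exact lift p d α A hmem
  | boxC0 hsub hmem' hsub'' => exact lift p d α A hmem
  | boxR hne hsub hmem' hD =>
      rcases Set.mem_insert_iff.mp hmem with heq | hold
      · rw [Prod.mk.injEq] at heq
        obtain ⟨hp, hbox⟩ := heq
        obtain ⟨hd, hα, hA⟩ := mkBox_inj hbox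
        subst hp; subst hd; subst hα; subst hA
        rename_i tt DD GG DL tss
        have hsub2 := sub?_of_subAt hsub
        refine ⟨tss.len, ⟨(α:ℝ), α.2, hne, d⟩, ∅, {A}, ?_, rfl, rfl, ?_, ?_⟩
        · exact labelAt_addChild_new _ _ _ _ _ _ _ hsub2
        · rw [seqAt_addChild_new _ _ _ _ _ _ _ hsub2]
          rfl
        · exact Finset.mem_singleton_self A
      · exact lift p d α A hold

theorem boxInv_rtg {a b : NSeq Pm × Set (List ℕ × MBForm Pm)}
    (h : Relation.ReflTransGen SatStep a b) (hinv : BoxInv a) : BoxInv b := by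
  induction h with
  | refl => exact hinv
  | tail _ hstep ih => exact boxInv_step hstep ih

theorem pleq_of_cond {U Js : Set ℝ} (hJf : Js.Finite) (hUf : U.Finite)
    (hJU : Js ⊆ U)
    (hint : ∀ α ∈ Js, ∀ β ∈ Js, α < β → (∀ γ ∈ Js, ¬(α < γ ∧ γ < β)) →
      ∃! δ, δ ∈ U ∧ α < δ ∧ δ < β)
    {α : ℝ} (hαJ : α ∈ Js) (h1J : (1:ℝ) ∈ Js)
    (l : MBLab Pm) (hlJ : l.α ∈ Js) (hl1 : l.α < 1) (d : Side)
    (hcond : α < labVal U l ∨ (d = Side.c ∧ α ≤ labVal U l)) :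
    pleq α d l.α l.d := by
  cases hld : l.d with
  | c =>
      have hlv : labVal U l = l.α := by unfold labVal; rw [hld]
      rw [hlv] at hcond
      cases d with
      | c =>
          show α ≤ l.α
          rcases hcond with h | ⟨_, h⟩
          · exact le_of_lt h
          · exact h
      | o =>
          show α < l.α
          rcases hcond with h | ⟨hc, _⟩
          · exact h
          · exact absurd hc (by simp)
  | o =>
      have hlv : labVal U l = Suc U l.α := by unfold labVal; rw [hld]
      rw [hlv] at hcond
      cases d with
      | c =>
          show α ≤ l.α
          rcases hcond with h | ⟨_, h⟩
          · exact le_of_lt_Suc hUf hJU hαJ h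
          · exact le_of_le_Suc hJf hUf hJU hint hαJ hlJ h1J hl1 h
      | o =>
          show α ≤ l.α
          rcases hcond with h | ⟨hc, _⟩
          · exact le_of_lt_Suc hUf hJU hαJ h
          · exact absurd hc (by simp)

theorem box_left_aux {t : NSeq Pm} {D : Set (List ℕ × MBForm Pm)} {U : Set ℝ}
    (hsat : Saturated (t, D))
    (hUf : U.Finite) (hUI : U ⊆ Set.Icc (0:ℝ) 1) (hJU : jset t ⊆ U)
    (hint : ∀ α ∈ jset t, ∀ β ∈ jset t, α < β → (∀ γ ∈ jset t, ¬(α < γ ∧ γ < β)) →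
      ∃! δ, δ ∈ U ∧ α < δ ∧ δ < β)
    (d : Side) (α : Pm.J) (A : MBForm Pm)
    (ih : ∀ (q : World t) Γ Δ ts, SubAt t q.val (.node Γ Δ ts) →
      (A ∈ Γ → q ∈ MBForm.valR (RCW t U) (VC t) A) ∧
      (A ∈ Δ → q ∉ MBForm.valR (RCW t U) (VC t) A))
    {p : World t} {Γ Δ : Finset (MBForm Pm)} {ts : NSeqs Pm}
    (hsub : SubAt t p.val (.node Γ Δ ts))
    (hA : mkBox d α A ∈ Γ) (q : World t)
    (hcond : (α:ℝ) < RCW t U p q ∨ (d = Side.c ∧ (α:ℝ) ≤ RCW t U p q)) :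
    q ∈ MBForm.valR (RCW t U) (VC t) A := by
  have hJf : (jset t).Finite := jset_finite t
  have hαJ : (α:ℝ) ∈ jset t :=
    jsetT_subset_jset t (form_mem_jsetT hsub _ (Or.inl hA) (alpha_mem_jsetF d α A))
  have h1J : (1:ℝ) ∈ jset t := Set.mem_insert_of_mem _ (Set.mem_insert _ _)
  have hα0 : (0:ℝ) ≤ α := (Pm.subI α.2).1
  by_cases hpq : p.val = q.val
  · -- self case
    have hR1 : RCW t U p q = 1 := by unfold RCW; rw [hpq, RC_self]
    have hcnd : ¬((α:ℝ) = 1 ∧ d = Side.o) := by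
      rintro ⟨h1, rfl⟩
      rcases hcond with h | ⟨hc, _⟩
      · rw [hR1, h1] at h; exact lt_irrefl 1 h
      · exact absurd hc (by simp)
    have hstep := SatStep.boxLself (D := D) hsub hcnd hA
    have hAΓ : A ∈ Γ := by
      have h := (sat_eq hsat hsub hstep).1
      rw [← h]; exact Finset.mem_insert_self _ _
    have hval := (ih p Γ Δ ts hsub).1 hAΓ
    have hq : q = p := Subtype.ext hpq.symm
    rw [hq]; exact hval
  · have hRC : RCW t U p q = max (lval t U p.val q.val) (lval t U q.val p.val) := by
      unfold RCW; rw [RC, if_neg hpq]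
    rcases lval_cases t U p.val q.val with hz | ⟨i, l, hqi, hlab, hv⟩
    · rcases lval_cases t U q.val p.val with hz' | ⟨j, l', hpj, hlab', hv'⟩
      · -- relation is zero
        have hR0 : RCW t U p q = 0 := by rw [hRC, hz, hz']; simp
        rcases hcond with h | ⟨hdc, h⟩
        · rw [hR0] at h; linarith
        · rw [hR0] at h
          have hα00 : (α:ℝ) = 0 := le_antisymm h hα0
          subst hdc
          have hα' : α = ⟨0, Pm.zero_mem⟩ := Subtype.ext hα00
          rw [hα'] at hA
          obtain ⟨w, hw⟩ := q.2
          cases w with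
          | node Γq Δq tsq =>
              have hstep := SatStep.boxC0 (D := D) hsub hA hw
              have hAq : A ∈ Γq := by
                have h2 := (sat_eq hsat hw hstep).1
                rw [← h2]; exact Finset.mem_insert_self _ _
              exact (ih q _ _ _ hw).1 hAq
      · -- q is the parent of p
        have hRv : RCW t U p q = labVal U l' := by
          rw [hRC, hz, hv']
          exact max_eq_right (labVal_nonneg hUf hUI l')
        rw [hRv] at hcond
        have hlJ : l'.α ∈ jset t := jsetT_subset_jset t (label_mem_jsetT _ _ _ _ hlab')
        have hl1 : l'.α < 1 := lt_of_le_of_ne (Pm.subI l'.memJ).2 l'.ne_one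
        have hpleq : pleq (α:ℝ) d l'.α l'.d :=
          pleq_of_cond hJf hUf hJU hint hαJ h1J l' hlJ hl1 d hcond
        obtain ⟨w, hw⟩ := q.2
        cases w with
        | node Γq Δq tsq =>
            obtain ⟨u, hget⟩ := get_of_labelAt hw hlab'
            have hsubp' : SubAt t (q.val ++ [j]) (.node Γ Δ ts) := by
              rw [← hpj]; exact hsub
            have hstep := SatStep.boxLsym (D := D) hw hget hsubp' hpleq hA
            have hAq : A ∈ Γq := by
              have h2 := (sat_eq hsat hw hstep).1
              rw [← h2]; exact Finset.mem_insert_self _ _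
            exact (ih q _ _ _ hw).1 hAq
    · -- q is a child of p
      have hz' : lval t U q.val p.val = 0 := by rw [hqi]; exact lval_concat_rev t U p.val i
      have hRv : RCW t U p q = labVal U l := by
        rw [hRC, hv, hz']
        exact max_eq_left (labVal_nonneg hUf hUI l)
      rw [hRv] at hcond
      have hlJ : l.α ∈ jset t := jsetT_subset_jset t (label_mem_jsetT _ _ _ _ hlab)
      have hl1 : l.α < 1 := lt_of_le_of_ne (Pm.subI l.memJ).2 l.ne_one
      have hpleq : pleq (α:ℝ) d l.α l.d :=
        pleq_of_cond hJf hUf hJU hint hαJ h1J l hlJ hl1 d hcond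
      obtain ⟨u, hget⟩ := get_of_labelAt hsub hlab
      obtain ⟨w, hw⟩ := q.2
      cases w with
      | node Γq Δq tsq =>
          have hsubq' : SubAt t (p.val ++ [i]) (.node Γq Δq tsq) := by
            rw [← hqi]; exact hw
          have hstep := SatStep.boxL (D := D) hsub hget hsubq' hpleq hA
          have hAq : A ∈ Γq := by
            have h2 := (sat_eq hsat hsubq' hstep).1
            rw [← h2]; exact Finset.mem_insert_self _ _
          exact (ih q _ _ _ hw).1 hAq

theorem box_right_aux {t : NSeq Pm} {D : Set (List ℕ × MBForm Pm)} {U : Set ℝ}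
    (hnp : ¬ Provable true t) (hsat : Saturated (t, D)) (hinv : BoxInv (t, D))
    (hUf : U.Finite) (hUI : U ⊆ Set.Icc (0:ℝ) 1)
    (d : Side) (α : Pm.J) (A : MBForm Pm)
    (ih : ∀ (q : World t) Γ Δ ts, SubAt t q.val (.node Γ Δ ts) →
      (A ∈ Γ → q ∈ MBForm.valR (RCW t U) (VC t) A) ∧
      (A ∈ Δ → q ∉ MBForm.valR (RCW t U) (VC t) A))
    {p : World t} {Γ Δ : Finset (MBForm Pm)} {ts : NSeqs Pm}
    (hsub : SubAt t p.val (.node Γ Δ ts))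
    (hA : mkBox d α A ∈ Δ) :
    ∃ q : World t, q ∉ MBForm.valR (RCW t U) (VC t) A ∧
      (d = Side.c → (α:ℝ) ≤ RCW t U p q) ∧ (d = Side.o → (α:ℝ) < RCW t U p q) := by
  by_cases hα1 : (α:ℝ) = 1
  · cases d with
    | o =>
        exfalso
        apply hnp
        have hα' : α = ⟨1, Pm.one_mem⟩ := Subtype.ext hα1
        rw [hα'] at hA
        exact Provable.axBoxO1 hsub hA
    | c =>
        have hA' : MBForm.boxc ⟨1, Pm.one_mem⟩ A ∈ Δ := by
          have hα' : α = ⟨1, Pm.one_mem⟩ := Subtype.ext hα1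
          rw [hα'] at hA; exact hA
        have hstep := SatStep.boxRself (D := D) hsub hA'
        have hAΔ : A ∈ Δ := by
          have h2 := (sat_eq hsat hsub hstep).2
          rw [← h2]; exact Finset.mem_insert_self _ _
        refine ⟨p, (ih p Γ Δ ts hsub).2 hAΔ, ?_, ?_⟩
        · intro _
          unfold RCW; rw [RC_self, hα1]
        · intro h; exact absurd h (by simp)
  · have hmemD : (p.val, mkBox d α A) ∈ D := by
      by_contra hD
      have hstep := SatStep.boxR (D := D) hα1 hsub hA hD
      have h2 := congrArg Prod.snd (hsat _ hstep)
      have h3 : insert (p.val, mkBox d α A) D = D := h2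
      apply hD
      rw [← h3]
      exact Set.mem_insert _ _
    obtain ⟨m, l, Γ', Δ', h1, h2, h3, h4, h5⟩ := hinv p.val d α A hmemD
    obtain ⟨ts', hsub'⟩ := subAt_of_seqAt h4
    have hnode : IsNode t (p.val ++ [m]) := ⟨_, hsub'⟩
    have hq5 : (⟨p.val ++ [m], hnode⟩ : World t) ∉ MBForm.valR (RCW t U) (VC t) A :=
      (ih ⟨p.val ++ [m], hnode⟩ Γ' Δ' ts' hsub').2 h5
    have hRC : RCW t U p ⟨p.val ++ [m], hnode⟩ = labVal U l := RC_child hUf hUI h1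
    refine ⟨⟨p.val ++ [m], hnode⟩, hq5, ?_, ?_⟩
    · intro hdc
      rw [hRC]
      have hlv : labVal U l = l.α := by unfold labVal; rw [h3, hdc]
      rw [hlv, h2]
    · intro hdo
      rw [hRC]
      have hlv : labVal U l = Suc U l.α := by unfold labVal; rw [h3, hdo]
      rw [hlv, h2]
      exact Suc_gt hUf (lt_of_le_of_ne (Pm.subI α.2).2 hα1)

end Infra

/-- Truth lemma for the canonical model: for every node
`Γ' ⇒ Δ'` of the saturation, every `A ∈ Γ'` is true and every `A ∈ Δ'` is
false at that world of the canonical model. -/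
theorem truth_lemma_canonical {Pm : MBParams} (t0 : NSeq Pm)
    (h0 : ¬ Provable true t0) (s : NSeq Pm × Set (List ℕ × MBForm Pm))
    (hre : Relation.ReflTransGen SatStep (t0, (∅ : Set (List ℕ × MBForm Pm))) s)
    (hsat : Saturated s) (U : Set ℝ) (hU : Interpolated (jset s.1) U) :
    ∀ (p : World s.1) Γ Δ ts, SubAt s.1 p.val (.node Γ Δ ts) →
      (∀ A ∈ Γ, p ∈ MBForm.valR (RCW s.1 U) (VC s.1) A) ∧
      (∀ A ∈ Δ, p ∉ MBForm.valR (RCW s.1 U) (VC s.1) A) := by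
  obtain ⟨t, D⟩ := s
  have hnp : ¬ Provable true t := unprov_rtg hre h0
  have hinv : BoxInv (t, D) :=
    boxInv_rtg hre (fun p d α A h => absurd h (Set.notMem_empty _))
  obtain ⟨hUf, hUI, hJU, hint⟩ := hU
  suffices H : ∀ A : MBForm Pm, ∀ (p : World t) Γ Δ ts, SubAt t p.val (.node Γ Δ ts) →
      (A ∈ Γ → p ∈ MBForm.valR (RCW t U) (VC t) A) ∧
      (A ∈ Δ → p ∉ MBForm.valR (RCW t U) (VC t) A) by
    intro p Γ Δ ts hsub
    exact ⟨fun A hA => (H A p Γ Δ ts hsub).1 hA, fun A hA => (H A p Γ Δ ts hsub).2 hA⟩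
  intro A
  induction A with
  | var n =>
      intro p Γ Δ ts hsub
      constructor
      · intro hA
        exact ⟨Γ, Δ, ts, hsub, hA⟩
      · intro hA hmem
        obtain ⟨Γ₁, Δ₁, ts₁, hsub₁, hvar⟩ := hmem
        have hd := subAt_det hsub hsub₁
        injection hd with e1 e2 e3
        rw [← e1] at hvar
        exact hnp (Provable.axId hsub hvar hA)
  | top =>
      intro p Γ Δ ts hsub
      exact ⟨fun _ => Set.mem_univ p, fun hA _ => hnp (Provable.axTop hsub hA)⟩
  | bot =>
      intro p Γ Δ ts hsub
      exact ⟨fun hA => (hnp (Provable.axBot hsub hA)).elim, fun _ => Set.notMem_empty p⟩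
  | neg A ihA =>
      intro p Γ Δ ts hsub
      constructor
      · intro hA
        have hstep := SatStep.negL (D := D) hsub hA
        have hAΔ : A ∈ Δ := by
          have h2 := (sat_eq hsat hsub hstep).2
          rw [← h2]; exact Finset.mem_insert_self _ _
        exact (ihA p Γ Δ ts hsub).2 hAΔ
      · intro hA hmem
        have hstep := SatStep.negR (D := D) hsub hA
        have hAΓ : A ∈ Γ := by
          have h2 := (sat_eq hsat hsub hstep).1
          rw [← h2]; exact Finset.mem_insert_self _ _
        exact hmem ((ihA p Γ Δ ts hsub).1 hAΓ)
  | conj A B ihA ihB =>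
      intro p Γ Δ ts hsub
      constructor
      · intro hA
        have hstep := SatStep.andL (D := D) hsub hA
        have he := (sat_eq hsat hsub hstep).1
        have hAΓ : A ∈ Γ := by rw [← he]; exact Finset.mem_insert_self _ _
        have hBΓ : B ∈ Γ := by
          rw [← he]; exact Finset.mem_insert_of_mem (Finset.mem_insert_self _ _)
        exact ⟨(ihA p Γ Δ ts hsub).1 hAΓ, (ihB p Γ Δ ts hsub).1 hBΓ⟩
      · intro hA hmem
        by_cases hPA : Provable true (t.setSeq p.val Γ (insert A Δ))
        · have hPB : ¬ Provable true (t.setSeq p.val Γ (insert B Δ)) := by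
            intro hPB
            apply hnp
            have h2 := Provable.andR hsub hPA hPB
            rwa [Finset.insert_eq_self.mpr hA, setSeq_self hsub] at h2
          have hstep := SatStep.andR (D := D) hsub hA (Or.inr rfl) hPB
          have hBΔ : B ∈ Δ := by
            have h2 := (sat_eq hsat hsub hstep).2
            rw [← h2]; exact Finset.mem_insert_self _ _
          exact (ihB p Γ Δ ts hsub).2 hBΔ hmem.2
        · have hstep := SatStep.andR (D := D) hsub hA (Or.inl rfl) hPA
          have hAΔ : A ∈ Δ := by
            have h2 := (sat_eq hsat hsub hstep).2
            rw [← h2]; exact Finset.mem_insert_self _ _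
          exact (ihA p Γ Δ ts hsub).2 hAΔ hmem.1
  | boxc α A ihA =>
      intro p Γ Δ ts hsub
      constructor
      · intro hA
        simp only [MBForm.valR, Set.mem_setOf_eq]
        intro q hq
        exact box_left_aux hsat hUf hUI hJU hint Side.c α A ihA hsub hA q
          (Or.inr ⟨rfl, hq⟩)
      · intro hA hmem
        obtain ⟨q, hq1, hq2, _⟩ :=
          box_right_aux hnp hsat hinv hUf hUI Side.c α A ihA hsub hA
        exact hq1 (hmem q (hq2 rfl))
  | boxo α A ihA =>
      intro p Γ Δ ts hsub
      constructor
      · intro hA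
        simp only [MBForm.valR, Set.mem_setOf_eq]
        intro q hq
        exact box_left_aux hsat hUf hUI hJU hint Side.o α A ihA hsub hA q (Or.inl hq)
      · intro hA hmem
        obtain ⟨q, hq1, _, hq3⟩ :=
          box_right_aux hnp hsat hinv hUf hUI Side.o α A ihA hsub hA
        exact hq1 (hmem q (hq3 rfl))

end MBQL
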